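/- In the saddle-point setting with inexact preconditioning, where M_U = [[F, Bᵀ],[0, H2]], M̃_U = [[P₁, Bᵀ],[0, H2]], P₁ ∈ ℝ^{n×n} is nonsingular, ‖P₁⁻¹F − I‖_{H1} ≤ C₃η, and H = blockdiag(H1, H2), one has ‖H(M̃_U⁻¹K) − (M̃_U⁻¹K)ᵀH‖_{H,H⁻¹} ≤ ‖H(M_U⁻¹K) − (M_U⁻¹K)ᵀH‖_{H,H⁻¹} + 2 C₃ η ‖M_U⁻¹K‖_H. -/

import Mathlib

open Matrix

/-- The `H`-norm of a vector: `‖u‖_H = (uᵀ H u)^{1/2}`. -/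
noncomputable def vnorm {α : Type*} [Fintype α] (H : Matrix α α ℝ) (u : α → ℝ) : ℝ :=
  Real.sqrt (u ⬝ᵥ (H *ᵥ u))

/-- The weighted operator norm `‖M‖_{H1,H2} = sup_{v ≠ 0} ‖M v‖_{H2} / ‖v‖_{H1}`.
For a square matrix, `‖M‖_H = wnorm H H M`; the spectral norm is `wnorm 1 1 M`. -/
noncomputable def wnorm {α β : Type*} [Fintype α] [Fintype β]
    (H1 : Matrix α α ℝ) (H2 : Matrix β β ℝ) (M : Matrix β α ℝ) : ℝ :=
  sSup {r : ℝ | ∃ v : α → ℝ, v ≠ 0 ∧ r = vnorm H2 (M *ᵥ v) / vnorm H1 v}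

open scoped Matrix.Norms.L2Operator


lemma vnorm_sq {α : Type*} [Fintype α] (S : Matrix α α ℝ) (hS : Sᵀ = S) (u : α → ℝ) :
    vnorm (S * S) u = ‖(EuclideanSpace.equiv α ℝ).symm (S *ᵥ u)‖ := by
  have h1 : u ⬝ᵥ ((S * S) *ᵥ u) = (S *ᵥ u) ⬝ᵥ (S *ᵥ u) := by
    rw [← mulVec_mulVec, dotProduct_mulVec, ← hS, vecMul_transpose, hS]
  rw [vnorm, h1, EuclideanSpace.norm_eq]
  congr 1
  simp [dotProduct, Real.norm_eq_abs, sq_abs, sq]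

lemma ratio_le_opNorm {α β : Type*} [Fintype α] [DecidableEq α] [Fintype β]
    (S1 : Matrix α α ℝ) (S2 : Matrix β β ℝ) (M : Matrix β α ℝ)
    (hS1 : S1ᵀ = S1) (hd1 : IsUnit S1.det) (hS2 : S2ᵀ = S2) (v : α → ℝ) :
    vnorm (S2 * S2) (M *ᵥ v) / vnorm (S1 * S1) v ≤ ‖S2 * M * S1⁻¹‖ := by
  rw [vnorm_sq S1 hS1, vnorm_sq S2 hS2]
  rcases eq_or_ne (‖(EuclideanSpace.equiv α ℝ).symm (S1 *ᵥ v)‖) 0 with h0 | h0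
  · rw [h0, div_zero]; positivity
  · rw [div_le_iff₀ (lt_of_le_of_ne (norm_nonneg _) (Ne.symm h0))]
    have key : S2 *ᵥ (M *ᵥ v) = (S2 * M * S1⁻¹) *ᵥ (S1 *ᵥ v) := by
      rw [mulVec_mulVec, mulVec_mulVec, Matrix.mul_assoc (S2 * M), nonsing_inv_mul S1 hd1,
        Matrix.mul_one]
    rw [key]
    exact l2_opNorm_mulVec (S2 * M * S1⁻¹) ((EuclideanSpace.equiv α ℝ).symm (S1 *ᵥ v))

lemma wnorm_eq {α β : Type*} [Fintype α] [DecidableEq α] [Fintype β]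
    (S1 : Matrix α α ℝ) (S2 : Matrix β β ℝ) (M : Matrix β α ℝ)
    (hS1 : S1ᵀ = S1) (hd1 : IsUnit S1.det) (hS2 : S2ᵀ = S2) :
    wnorm (S1 * S1) (S2 * S2) M = ‖S2 * M * S1⁻¹‖ := by
  set A := S2 * M * S1⁻¹ with hA
  set T := {r : ℝ | ∃ v : α → ℝ, v ≠ 0 ∧ r = vnorm (S2 * S2) (M *ᵥ v) / vnorm (S1 * S1) v}
  have hub : ∀ r ∈ T, r ≤ ‖A‖ := by
    rintro r ⟨v, -, rfl⟩
    exact ratio_le_opNorm S1 S2 M hS1 hd1 hS2 v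
  refine le_antisymm (Real.sSup_le hub (norm_nonneg _)) ?_
  have hnn : 0 ≤ sSup T := Real.sSup_nonneg (by
    rintro r ⟨v, -, rfl⟩
    exact div_nonneg (Real.sqrt_nonneg _) (Real.sqrt_nonneg _))
  rw [l2_opNorm_def]
  refine ContinuousLinearMap.opNorm_le_bound _ hnn (fun x => ?_)
  rcases eq_or_ne x 0 with rfl | hx
  · simp
  · set v : α → ℝ := S1⁻¹ *ᵥ (EuclideanSpace.equiv α ℝ) x with hv
    have hxv : S1 *ᵥ v = (EuclideanSpace.equiv α ℝ) x := by
      rw [hv, mulVec_mulVec, mul_nonsing_inv S1 hd1, one_mulVec]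
    have hvne : v ≠ 0 := by
      intro h
      apply hx
      have : S1 *ᵥ v = 0 := by rw [h, mulVec_zero]
      rw [hxv] at this
      simpa using congrArg (EuclideanSpace.equiv α ℝ).symm this
    have hmem : vnorm (S2 * S2) (M *ᵥ v) / vnorm (S1 * S1) v ∈ T := ⟨v, hvne, rfl⟩
    have hle : vnorm (S2 * S2) (M *ᵥ v) / vnorm (S1 * S1) v ≤ sSup T :=
      le_csSup ⟨‖A‖, hub⟩ hmem
    have hden : vnorm (S1 * S1) v = ‖x‖ := by
      rw [vnorm_sq S1 hS1, hxv]
      simp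
    have hvec : S2 *ᵥ (M *ᵥ v) = A *ᵥ ((EuclideanSpace.equiv α ℝ) x) := by
      rw [hA, ← hxv]
      simp only [mulVec_mulVec]
      rw [Matrix.mul_assoc (S2 * M), nonsing_inv_mul S1 hd1, Matrix.mul_one]
    have happ : (toEuclideanLin (𝕜 := ℝ) (m := β) (n := α)).trans
        LinearMap.toContinuousLinearMap A x
        = (EuclideanSpace.equiv β ℝ).symm (A *ᵥ ((EuclideanSpace.equiv α ℝ) x)) := rfl
    have hnum : vnorm (S2 * S2) (M *ᵥ v) =
        ‖(toEuclideanLin (𝕜 := ℝ) (m := β) (n := α)).trans LinearMap.toContinuousLinearMap A x‖ := by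
      rw [vnorm_sq S2 hS2, happ, hvec]
    rw [hnum, hden] at hle
    have hxpos : 0 < ‖x‖ := norm_pos_iff.mpr hx
    calc ‖_‖ ≤ sSup T * ‖x‖ := by
          rw [← div_le_iff₀ hxpos]; exact hle

section
open scoped MatrixOrder
lemma exists_sqrt {α : Type*} [Fintype α] [DecidableEq α] {H : Matrix α α ℝ} (hH : H.PosDef) :
    ∃ S : Matrix α α ℝ, Sᵀ = S ∧ IsUnit S.det ∧ S * S = H := by
  refine ⟨CFC.sqrt H, ?_, ?_, CFC.sqrt_mul_sqrt_self H (nonneg_iff_posSemidef.mpr hH.posSemidef)⟩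
  · have h := (nonneg_iff_posSemidef.mp (CFC.sqrt_nonneg H)).1
    ext i j
    have h2 := congrFun (congrFun h i) j
    simp only [conjTranspose_apply, star_trivial] at h2
    rw [transpose_apply, h2]
  · have hm : CFC.sqrt H * CFC.sqrt H = H := CFC.sqrt_mul_sqrt_self H (nonneg_iff_posSemidef.mpr hH.posSemidef)
    have hd : (CFC.sqrt H).det * (CFC.sqrt H).det = H.det := by
      rw [← det_mul, hm]
    rw [isUnit_iff_ne_zero]
    intro h0
    rw [h0, mul_zero] at hd
    exact hH.det_pos.ne' hd.symm
end

lemma ratio_le_wnorm {α : Type*} [Fintype α] [DecidableEq α] {H : Matrix α α ℝ}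
    (hH : H.PosDef) (M : Matrix α α ℝ) (v : α → ℝ) :
    vnorm H (M *ᵥ v) / vnorm H v ≤ wnorm H H M := by
  obtain ⟨S, hs, hd, hm⟩ := exists_sqrt hH
  rw [← hm, wnorm_eq S S M hs hd hs]
  exact ratio_le_opNorm S S M hs hd hs v

lemma posDef_fromBlocks {α β : Type*} [Fintype α] [DecidableEq α] [Fintype β] [DecidableEq β]
    {H1 : Matrix α α ℝ} {H2 : Matrix β β ℝ} (h1 : H1.PosDef) (h2 : H2.PosDef) :
    (fromBlocks H1 0 0 H2).PosDef := by
  refine PosDef.of_dotProduct_mulVec_pos ?_ ?_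
  · rw [IsHermitian, fromBlocks_conjTranspose, h1.1.eq, h2.1.eq]
    simp
  · intro x hx
    have hx' : x = Sum.elim (x ∘ Sum.inl) (x ∘ Sum.inr) := (Sum.elim_comp_inl_inr x).symm
    rw [star_trivial, hx', fromBlocks_mulVec]
    simp only [zero_mulVec, add_zero, zero_add, sumElim_dotProduct_sumElim,
      Sum.elim_comp_inl, Sum.elim_comp_inr]
    have h1' := h1.posSemidef.dotProduct_mulVec_nonneg (x ∘ Sum.inl)
    have h2' := h2.posSemidef.dotProduct_mulVec_nonneg (x ∘ Sum.inr)
    rw [star_trivial] at h1' h2'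
    rcases eq_or_ne (x ∘ Sum.inl) 0 with he | he
    · have he2 : x ∘ Sum.inr ≠ 0 := by
        intro he2
        apply hx
        rw [hx', he, he2]
        ext (i | i) <;> simp
      have := h2.dotProduct_mulVec_pos he2
      rw [star_trivial] at this
      have h0 : (x ∘ Sum.inl) ⬝ᵥ H1 *ᵥ (x ∘ Sum.inl) = 0 := by rw [he]; simp
      linarith
    · have := h1.dotProduct_mulVec_pos he
      rw [star_trivial] at this
      linarith

lemma wnorm_fromBlocks_le {α β : Type*} [Fintype α] [DecidableEq α] [Fintype β] [DecidableEq β]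
    {H1 : Matrix α α ℝ} {H2 : Matrix β β ℝ} (h1 : H1.PosDef) (h2 : H2.PosDef)
    (X : Matrix α α ℝ) {c : ℝ} (hc : 0 ≤ c) (hX : wnorm H1 H1 X ≤ c) :
    wnorm (fromBlocks H1 0 0 H2) (fromBlocks H1 0 0 H2) (fromBlocks X 0 0 0) ≤ c := by
  apply Real.sSup_le _ hc
  rintro r ⟨v, hv, rfl⟩
  have hv' : v = Sum.elim (v ∘ Sum.inl) (v ∘ Sum.inr) := (Sum.elim_comp_inl_inr v).symm
  set v1 := v ∘ Sum.inl with hv1def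
  set v2 := v ∘ Sum.inr with hv2def
  have hDv : (fromBlocks X 0 0 0 : Matrix (α ⊕ β) (α ⊕ β) ℝ) *ᵥ v
      = Sum.elim (X *ᵥ v1) 0 := by
    rw [hv', fromBlocks_mulVec]
    simp [Sum.elim_comp_inl, Sum.elim_comp_inr]
  have hnum : vnorm (fromBlocks H1 0 0 H2) (Sum.elim (X *ᵥ v1) (0 : β → ℝ))
      = vnorm H1 (X *ᵥ v1) := by
    rw [vnorm, vnorm, fromBlocks_mulVec]
    simp [sumElim_dotProduct_sumElim, Sum.elim_comp_inl, Sum.elim_comp_inr]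
  have hden : vnorm H1 v1 ≤ vnorm (fromBlocks H1 0 0 H2) v := by
    rw [hv', vnorm, vnorm, fromBlocks_mulVec]
    simp only [zero_mulVec, add_zero, zero_add, sumElim_dotProduct_sumElim,
      Sum.elim_comp_inl, Sum.elim_comp_inr]
    apply Real.sqrt_le_sqrt
    have h2' := h2.posSemidef.dotProduct_mulVec_nonneg v2
    rw [star_trivial] at h2'
    linarith
  rw [hDv, hnum]
  by_cases hz : v1 = 0
  · rw [hz]
    simp only [mulVec_zero, vnorm, zero_dotProduct, Real.sqrt_zero, zero_div]
    exact hc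
  · have hpos : 0 < vnorm H1 v1 := Real.sqrt_pos.mpr (by
      have := h1.dotProduct_mulVec_pos hz; rwa [star_trivial] at this)
    calc vnorm H1 (X *ᵥ v1) / vnorm (fromBlocks H1 0 0 H2) v
        ≤ vnorm H1 (X *ᵥ v1) / vnorm H1 v1 := by
          gcongr
          exact Real.sqrt_nonneg _
      _ ≤ wnorm H1 H1 X := ratio_le_wnorm h1 X v1
      _ ≤ c := hX

theorem stmt_17
    {n m : ℕ} (F : Matrix (Fin n) (Fin n) ℝ) (B : Matrix (Fin m) (Fin n) ℝ)
    (H1 N : Matrix (Fin n) (Fin n) ℝ) (H2 : Matrix (Fin m) (Fin m) ℝ)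
    (hH1 : H1 = ((1 : ℝ)/2) • (F + Fᵀ)) (hN : N = ((1 : ℝ)/2) • (F - Fᵀ))
    (hH1pd : H1.PosDef) (hH2pd : H2.PosDef)
    (hBrank : B.rank = m)
    (η C₃ : ℝ) (hη : 0 < η) (hC3 : 0 < C₃)
    (P₁ : Matrix (Fin n) (Fin n) ℝ) (hP₁ : IsUnit P₁.det)
    (hP1F : wnorm H1 H1 (P₁⁻¹ * F - 1) ≤ C₃ * η)
    (K MU MUt H : Matrix (Fin n ⊕ Fin m) (Fin n ⊕ Fin m) ℝ)
    (hK : K = fromBlocks F Bᵀ B 0)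
    (hMU : MU = fromBlocks F Bᵀ 0 H2)
    (hMUt : MUt = fromBlocks P₁ Bᵀ 0 H2)
    (hH : H = fromBlocks H1 0 0 H2) :
    wnorm H H⁻¹ (H * (MUt⁻¹ * K) - (MUt⁻¹ * K)ᵀ * H) ≤
      wnorm H H⁻¹ (H * (MU⁻¹ * K) - (MU⁻¹ * K)ᵀ * H) +
        2 * C₃ * η * wnorm H H (MU⁻¹ * K) := by
  classical
  have hFdet : IsUnit F.det := by
    rw [isUnit_iff_ne_zero]
    intro h0
    obtain ⟨v, hv, hFv⟩ := (Matrix.exists_mulVec_eq_zero_iff).mpr h0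
    have hq := hH1pd.dotProduct_mulVec_pos hv
    rw [star_trivial] at hq
    have hz : v ⬝ᵥ H1 *ᵥ v = 0 := by
      rw [hH1, smul_mulVec, dotProduct_smul, add_mulVec, hFv, zero_add,
        dotProduct_mulVec, vecMul_transpose, hFv, zero_dotProduct, smul_zero]
    rw [hz] at hq
    exact lt_irrefl 0 hq
  have hH2det : IsUnit H2.det := isUnit_iff_ne_zero.mpr hH2pd.det_pos.ne'
  have hMUd : IsUnit MU.det := by
    rw [hMU, det_fromBlocks_zero₂₁]; exact hFdet.mul hH2det
  have hMUtd : IsUnit MUt.det := by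
    rw [hMUt, det_fromBlocks_zero₂₁]; exact hP₁.mul hH2det
  have hHpd : H.PosDef := by rw [hH]; exact posDef_fromBlocks hH1pd hH2pd
  set X : Matrix (Fin n) (Fin n) ℝ := P₁⁻¹ * F - 1 with hX
  set D : Matrix (Fin n ⊕ Fin m) (Fin n ⊕ Fin m) ℝ := fromBlocks X 0 0 0 with hD
  set G : Matrix (Fin n ⊕ Fin m) (Fin n ⊕ Fin m) ℝ := MU⁻¹ * K with hG
  have hMUtinv : MUt⁻¹ = fromBlocks P₁⁻¹ (-(P₁⁻¹ * Bᵀ * H2⁻¹)) 0 H2⁻¹ := by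
    rw [hMUt]
    exact inv_fromBlocks_zero₂₁_of_isUnit_iff _ _ _
      (iff_of_true ((Matrix.isUnit_iff_isUnit_det _).mpr hP₁)
        ((Matrix.isUnit_iff_isUnit_det _).mpr hH2det))
  have hsub : MU - MUt = fromBlocks (F - P₁) 0 0 0 := by
    rw [hMU, hMUt]
    ext (i | i) (j | j) <;> simp [fromBlocks]
  have hDeq : MUt⁻¹ * (MU - MUt) = D := by
    rw [hMUtinv, hsub, fromBlocks_multiply, hD, hX]
    simp [Matrix.mul_sub, nonsing_inv_mul P₁ hP₁]
  have hGt : MUt⁻¹ * K = G + D * G := by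
    have h4 : MUt⁻¹ * (MU - MUt) * MU⁻¹ = MUt⁻¹ - MU⁻¹ := by
      rw [Matrix.mul_sub, Matrix.sub_mul, Matrix.mul_assoc MUt⁻¹ MU MU⁻¹,
        mul_nonsing_inv MU hMUd, Matrix.mul_one, nonsing_inv_mul MUt hMUtd, Matrix.one_mul]
    have h5 : D * G = MUt⁻¹ * K - G := by
      rw [← hDeq, hG, ← Matrix.mul_assoc, h4, Matrix.sub_mul]
    rw [h5]
    abel
  obtain ⟨S, hsS, hdS, hmS⟩ := exists_sqrt hHpd
  have hsSi : (S⁻¹)ᵀ = S⁻¹ := by rw [transpose_nonsing_inv, hsS]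
  have hmSi : S⁻¹ * S⁻¹ = H⁻¹ := by rw [← hmS, Matrix.mul_inv_rev]
  have eqA : ∀ M' : Matrix (Fin n ⊕ Fin m) (Fin n ⊕ Fin m) ℝ,
      wnorm H H⁻¹ M' = ‖S⁻¹ * M' * S⁻¹‖ := fun M' => by
    rw [← hmSi, ← hmS, wnorm_eq S S⁻¹ M' hsS hdS hsSi]
  have eqB : ∀ M' : Matrix (Fin n ⊕ Fin m) (Fin n ⊕ Fin m) ℝ,
      wnorm H H M' = ‖S * M' * S⁻¹‖ := fun M' => by
    rw [← hmS, wnorm_eq S S M' hsS hdS hsS]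
  have hTH : S⁻¹ * H = S := by
    rw [← hmS, ← Matrix.mul_assoc, nonsing_inv_mul S hdS, Matrix.one_mul]
  have hHS : H * S⁻¹ = S := by
    rw [← hmS, Matrix.mul_assoc, mul_nonsing_inv S hdS, Matrix.mul_one]
  set E : Matrix (Fin n ⊕ Fin m) (Fin n ⊕ Fin m) ℝ := D * G with hE
  have hsplit : H * (MUt⁻¹ * K) - (MUt⁻¹ * K)ᵀ * H
      = (H * G - Gᵀ * H) + (H * E - Eᵀ * H) := by
    rw [hGt, transpose_add]
    noncomm_ring
  have nE1 : S⁻¹ * (H * E) * S⁻¹ = S * E * S⁻¹ := by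
    rw [← Matrix.mul_assoc S⁻¹ H E, hTH]
  have nE2 : ‖S⁻¹ * (Eᵀ * H) * S⁻¹‖ = ‖S * E * S⁻¹‖ := by
    have nE2eq : S⁻¹ * (Eᵀ * H) * S⁻¹ = (S * E * S⁻¹)ᵀ := by
      simp only [transpose_mul, hsSi, hsS, Matrix.mul_assoc, hHS]
    rw [nE2eq]
    have htc : (S * E * S⁻¹)ᵀ = (S * E * S⁻¹)ᴴ := by
      ext i j; simp [conjTranspose_apply]
    rw [htc, l2_opNorm_conjTranspose]
  have hDbound : ‖S * D * S⁻¹‖ ≤ C₃ * η := by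
    have h6 : wnorm H H D ≤ C₃ * η := by
      rw [hH, hD]
      exact wnorm_fromBlocks_le hH1pd hH2pd X (le_of_lt (mul_pos hC3 hη)) hP1F
    rw [← eqB D]
    exact h6
  have hprod : S * E * S⁻¹ = (S * D * S⁻¹) * (S * G * S⁻¹) := by
    rw [hE]
    simp only [Matrix.mul_assoc]
    rw [← Matrix.mul_assoc S⁻¹ S (G * S⁻¹), nonsing_inv_mul S hdS, Matrix.one_mul]
  have nE3 : ‖S * E * S⁻¹‖ ≤ C₃ * η * ‖S * G * S⁻¹‖ := by
    rw [hprod]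
    exact le_trans (l2_opNorm_mul _ _)
      (mul_le_mul_of_nonneg_right hDbound (norm_nonneg _))
  rw [eqA, eqA, eqB, hsplit]
  have hdistrib : S⁻¹ * ((H * G - Gᵀ * H) + (H * E - Eᵀ * H)) * S⁻¹
      = S⁻¹ * (H * G - Gᵀ * H) * S⁻¹ + (S⁻¹ * (H * E) * S⁻¹ - S⁻¹ * (Eᵀ * H) * S⁻¹) := by
    noncomm_ring
  rw [hdistrib]
  have hb1 : ‖S⁻¹ * (H * G - Gᵀ * H) * S⁻¹ + (S⁻¹ * (H * E) * S⁻¹ - S⁻¹ * (Eᵀ * H) * S⁻¹)‖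
      ≤ ‖S⁻¹ * (H * G - Gᵀ * H) * S⁻¹‖ + (‖S⁻¹ * (H * E) * S⁻¹‖ + ‖S⁻¹ * (Eᵀ * H) * S⁻¹‖) := by
    calc ‖S⁻¹ * (H * G - Gᵀ * H) * S⁻¹ + (S⁻¹ * (H * E) * S⁻¹ - S⁻¹ * (Eᵀ * H) * S⁻¹)‖
        ≤ ‖S⁻¹ * (H * G - Gᵀ * H) * S⁻¹‖ + ‖S⁻¹ * (H * E) * S⁻¹ - S⁻¹ * (Eᵀ * H) * S⁻¹‖ :=
          norm_add_le _ _
      _ ≤ _ := by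
          have := norm_sub_le (S⁻¹ * (H * E) * S⁻¹) (S⁻¹ * (Eᵀ * H) * S⁻¹)
          linarith
  have hb2 : ‖S⁻¹ * (H * E) * S⁻¹‖ = ‖S * E * S⁻¹‖ := by rw [nE1]
  linarith
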